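/- Let μ > 0, R > 0, β > 0 and let σ_S(r) = [β/(β+RP₀(R))]·(R/r)^{1/2}·I_{1/2}(r)/I_{1/2}(R) solve Δσ_S = σ_S radially. Define λ = σ_S''(R) + β·σ_S'(R) and φ(r) = −μ·σ_S'(r) + (μλ/(1+βR))·r. Then φ satisfies −φ'' − (2/r)φ' + (2/r²)φ = μ·σ_S'(r) on (0,R) and φ'(R) + β·φ(R) = 0. -/

import Mathlib

/-- `sbI k x = I_{k - 1/2}(x)`, the modified Bessel function of the first kind of
half-integer order, defined from the elementary closed forms
`I_{-1/2}(x) = √(2/(πx)) cosh x`, `I_{1/2}(x) = √(2/(πx)) sinh x` and the recurrence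
`I_{ν+1}(x) = I_{ν-1}(x) - (2ν/x) I_ν(x)`. -/
noncomputable def sbI : ℕ → ℝ → ℝ
  | 0, x => Real.sqrt (2 / (Real.pi * x)) * Real.cosh x
  | 1, x => Real.sqrt (2 / (Real.pi * x)) * Real.sinh x
  | (k + 2), x => sbI k x - ((2 * (k : ℝ) + 1) / x) * sbI (k + 1) x

/-- `besselIhalf n x = I_{n+1/2}(x)`. -/
noncomputable def besselIhalf (n : ℕ) (x : ℝ) : ℝ := sbI (n + 1) x

/-- `P n ξ = I_{n+3/2}(ξ) / (ξ · I_{n+1/2}(ξ))`. -/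
noncomputable def P (n : ℕ) (ξ : ℝ) : ℝ := besselIhalf (n + 1) ξ / (ξ * besselIhalf n ξ)


/-- The radially symmetric stationary nutrient concentration
`σ_S(r) = [β/(β+R·P₀(R))]·(R/r)^{1/2}·I_{1/2}(r)/I_{1/2}(R)`. -/
noncomputable def sigS (R β : ℝ) (r : ℝ) : ℝ :=
  β / (β + R * P 0 R) * (Real.sqrt R / Real.sqrt r) * (besselIhalf 0 r / besselIhalf 0 R)

/-- `λ = σ_S''(R) + β·σ_S'(R)`. -/
noncomputable def lam (R β : ℝ) : ℝ :=
  deriv (deriv (sigS R β)) R + β * deriv (sigS R β) R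

/-- `φ(r) = −μ·σ_S'(r) + (μλ/(1+βR))·r`. -/
noncomputable def phiF (μ R β : ℝ) (r : ℝ) : ℝ :=
  -μ * deriv (sigS R β) r + μ * lam R β / (1 + β * R) * r


section Aux
open Real Filter Set


noncomputable def g0 (K r : ℝ) : ℝ := K * (Real.sinh r / r)
noncomputable def g1 (K r : ℝ) : ℝ := K * (Real.cosh r / r - Real.sinh r / r^2)
noncomputable def g2 (K r : ℝ) : ℝ := K * (Real.sinh r / r - 2*Real.cosh r/r^2 + 2*Real.sinh r/r^3)
noncomputable def g3 (K r : ℝ) : ℝ := K * (Real.cosh r / r - 3*Real.sinh r/r^2 + 6*Real.cosh r/r^3 - 6*Real.sinh r/r^4)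

lemma hd0 (K : ℝ) {r : ℝ} (hr : r ≠ 0) : HasDerivAt (g0 K) (g1 K r) r := by
  have h := ((Real.hasDerivAt_sinh r).div ((hasDerivAt_id' r)) hr).const_mul K
  refine h.congr_deriv ?_
  unfold g1
  field_simp

lemma hd1 (K : ℝ) {r : ℝ} (hr : r ≠ 0) : HasDerivAt (g1 K) (g2 K r) r := by
  have h1 := (Real.hasDerivAt_cosh r).div ((hasDerivAt_id' r)) hr
  have h2 := (Real.hasDerivAt_sinh r).div (hasDerivAt_pow 2 r) (pow_ne_zero 2 hr)
  have h := ((h1.sub h2).const_mul K)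
  refine h.congr_deriv ?_
  unfold g2
  field_simp
  ring

lemma hd2 (K : ℝ) {r : ℝ} (hr : r ≠ 0) : HasDerivAt (g2 K) (g3 K r) r := by
  have h1 := (Real.hasDerivAt_sinh r).div ((hasDerivAt_id' r)) hr
  have h2 := ((Real.hasDerivAt_cosh r).div (hasDerivAt_pow 2 r) (pow_ne_zero 2 hr)).const_mul 2
  have h3 := ((Real.hasDerivAt_sinh r).div (hasDerivAt_pow 3 r) (pow_ne_zero 3 hr)).const_mul 2
  have h := (((h1.sub h2).add h3).const_mul K)
  refine (h.congr_deriv ?_).congr_of_eventuallyEq (Filter.Eventually.of_forall fun y => ?_)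
  · unfold g3; field_simp; ring
  · simp only [g2, Pi.add_apply, Pi.sub_apply, Pi.div_apply]; ring

lemma sigS_eq (R β : ℝ) (hR : 0 < R) :
    ∀ r ∈ Set.Ioi (0:ℝ), sigS R β r =
      g0 (β / (β + R * P 0 R) * Real.sqrt R * Real.sqrt (2/Real.pi) / besselIhalf 0 R) r := by
  intro r hr
  have hr0 : (0:ℝ) < r := hr
  have hs : Real.sqrt r ≠ 0 := by positivity
  have hrr : Real.sqrt r * Real.sqrt r = r := Real.mul_self_sqrt hr0.le
  have hb : besselIhalf 0 r = Real.sqrt (2/Real.pi) / Real.sqrt r * Real.sinh r := by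
    show sbI 1 r = _
    rw [sbI]
    rw [show (2:ℝ)/(Real.pi*r) = (2/Real.pi)/r from (div_div _ _ _).symm,
        Real.sqrt_div (by positivity) r]
  simp only [sigS, g0, hb]
  rcases eq_or_ne (besselIhalf 0 R) 0 with h | h
  · simp [h]
  · set S := Real.sinh r with hS
    set s := Real.sqrt r with hs'
    rcases eq_or_ne (β + R * P 0 R) 0 with hbp | hbp
    · simp [hbp]
    · rw [← hrr]
      field_simp

end Aux

/-- `φ` satisfies `−φ'' − (2/r)φ' + (2/r²)φ = μ·σ_S'` on `(0,R)` and
the Robin boundary condition `φ'(R) + β·φ(R) = 0`. -/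
theorem stmt16 (μ R β : ℝ) (hμ : 0 < μ) (hR : 0 < R) (hβ : 0 < β) :
    (∀ r ∈ Set.Ioo (0 : ℝ) R,
      -(deriv (deriv (phiF μ R β)) r) - (2 / r) * deriv (phiF μ R β) r
          + (2 / r ^ 2) * phiF μ R β r = μ * deriv (sigS R β) r) ∧
    deriv (phiF μ R β) R + β * phiF μ R β R = 0 := by
  have hK := sigS_eq R β hR
  set K := β / (β + R * P 0 R) * Real.sqrt R * Real.sqrt (2/Real.pi) / besselIhalf 0 R with hKdef
  have hRmem : R ∈ Set.Ioi (0:ℝ) := Set.mem_Ioi.mpr hR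
  have hd : ∀ r ∈ Set.Ioi (0:ℝ), deriv (sigS R β) r = g1 K r := by
    intro r hr
    have hev : sigS R β =ᶠ[nhds r] g0 K := by
      filter_upwards [Ioi_mem_nhds hr] with x hx using hK x hx
    rw [hev.deriv_eq]
    exact (hd0 K (ne_of_gt hr)).deriv
  have hdd : ∀ r ∈ Set.Ioi (0:ℝ), deriv (deriv (sigS R β)) r = g2 K r := by
    intro r hr
    have hev : deriv (sigS R β) =ᶠ[nhds r] g1 K := by
      filter_upwards [Ioi_mem_nhds hr] with x hx using hd x hx
    rw [hev.deriv_eq]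
    exact (hd1 K (ne_of_gt hr)).deriv
  have hlam : lam R β = g2 K R + β * g1 K R := by
    rw [lam, hdd R hRmem, hd R hRmem]
  set c := μ * lam R β / (1 + β * R) with hc
  have hphi : ∀ r ∈ Set.Ioi (0:ℝ), phiF μ R β r = -μ * g1 K r + c * r := by
    intro r hr; rw [phiF, hd r hr]
  have hdphi : ∀ r ∈ Set.Ioi (0:ℝ), deriv (phiF μ R β) r = -μ * g2 K r + c := by
    intro r hr
    have hev : phiF μ R β =ᶠ[nhds r] fun x => -μ * g1 K x + c * x := by
      filter_upwards [Ioi_mem_nhds hr] with x hx using hphi x hx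
    rw [hev.deriv_eq]
    have h := ((hd1 K (ne_of_gt (Set.mem_Ioi.mp hr))).const_mul (-μ)).add
      ((hasDerivAt_id' r).const_mul c)
    exact h.deriv.trans (by ring)
  have hddphi : ∀ r ∈ Set.Ioi (0:ℝ), deriv (deriv (phiF μ R β)) r = -μ * g3 K r := by
    intro r hr
    have hev : deriv (phiF μ R β) =ᶠ[nhds r] fun x => -μ * g2 K x + c := by
      filter_upwards [Ioi_mem_nhds hr] with x hx using hdphi x hx
    rw [hev.deriv_eq]
    have h := ((hd2 K (ne_of_gt (Set.mem_Ioi.mp hr))).const_mul (-μ)).add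
      (hasDerivAt_const r c)
    exact h.deriv.trans (by ring)
  have h1 : (1 : ℝ) + β * R ≠ 0 := by positivity
  constructor
  · intro r hr
    have hr0 : (0:ℝ) < r := hr.1
    have hrm : r ∈ Set.Ioi (0:ℝ) := Set.mem_Ioi.mpr hr0
    rw [hddphi r hrm, hdphi r hrm, hphi r hrm, hd r hrm]
    simp only [g1, g2, g3]
    have hrne : r ≠ 0 := ne_of_gt hr0
    field_simp
    ring
  · rw [hdphi R hRmem, hphi R hRmem, hc, hlam]
    field_simp
    ring
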